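/- The color Hecke R-matrix R satisfies the quantum Yang–Baxter equation in braid form: R₁₂ ∘ R₂₃ ∘ R₁₂ = R₂₃ ∘ R₁₂ ∘ R₂₃ as linear operators on V⊗V⊗V. -/

import Mathlib

set_option maxHeartbeats 2000000


open TensorProduct

/-- The color Hecke R-matrix satisfies the quantum Yang–Baxter equation
in braid form `R₁₂ ∘ R₂₃ ∘ R₁₂ = R₂₃ ∘ R₁₂ ∘ R₂₃` on `V ⊗ V ⊗ V`, where `V = J →₀ ℂ`
is the free complex vector space on a linearly ordered index set `J` graded by
`p : J → Γ`, `ε` is a commutation factor on `Γ` with parity function `π`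
(`ε α α = (-1) ^ π α`, `π α ∈ {0, 1}`), `q` is a nonzero complex number, and `R` is
determined on basis vectors `e a = Finsupp.single a 1` by:
`R (e a ⊗ e a) = (q ^ (1 - 2 π (p a)) * (-1) ^ π (p a)) • (e a ⊗ e a)`,
`R (e a ⊗ e b) = (q - q⁻¹) • (e a ⊗ e b) + ε (p a) (p b) • (e b ⊗ e a)` for `a < b`,
`R (e a ⊗ e b) = ε (p a) (p b) • (e b ⊗ e a)` for `a > b`. -/
theorem colorHecke_yangBaxter
    {Γ : Type*} [AddCommGroup Γ] (ε : Γ → Γ → ℂ)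
    (hε0 : ∀ α β, ε α β ≠ 0)
    (hε1 : ∀ α β, ε α β * ε β α = 1)
    (hε2 : ∀ α β γ, ε (α + β) γ = ε α γ * ε β γ)
    (π : Γ → ℕ)
    (hπ01 : ∀ α, π α = 0 ∨ π α = 1)
    (hπ : ∀ α, ε α α = (-1 : ℂ) ^ (π α))
    {J : Type*} [LinearOrder J] (p : J → Γ)
    (q : ℂ) (hq : q ≠ 0)
    (R : ((J →₀ ℂ) ⊗[ℂ] (J →₀ ℂ)) →ₗ[ℂ] ((J →₀ ℂ) ⊗[ℂ] (J →₀ ℂ)))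
    (hRdiag : ∀ a : J,
      R (Finsupp.single a (1 : ℂ) ⊗ₜ[ℂ] Finsupp.single a (1 : ℂ)) =
        (q ^ ((1 : ℤ) - 2 * (π (p a) : ℤ)) * (-1 : ℂ) ^ (π (p a))) •
          (Finsupp.single a (1 : ℂ) ⊗ₜ[ℂ] Finsupp.single a (1 : ℂ)))
    (hRlt : ∀ a b : J, a < b →
      R (Finsupp.single a (1 : ℂ) ⊗ₜ[ℂ] Finsupp.single b (1 : ℂ)) =
        (q - q⁻¹) • (Finsupp.single a (1 : ℂ) ⊗ₜ[ℂ] Finsupp.single b (1 : ℂ)) +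
          ε (p a) (p b) • (Finsupp.single b (1 : ℂ) ⊗ₜ[ℂ] Finsupp.single a (1 : ℂ)))
    (hRgt : ∀ a b : J, b < a →
      R (Finsupp.single a (1 : ℂ) ⊗ₜ[ℂ] Finsupp.single b (1 : ℂ)) =
        ε (p a) (p b) • (Finsupp.single b (1 : ℂ) ⊗ₜ[ℂ] Finsupp.single a (1 : ℂ))) :
    (TensorProduct.map R LinearMap.id) ∘ₗ
      ((TensorProduct.assoc ℂ (J →₀ ℂ) (J →₀ ℂ) (J →₀ ℂ)).symm.toLinearMap ∘ₗ
        TensorProduct.map LinearMap.id R ∘ₗ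
        (TensorProduct.assoc ℂ (J →₀ ℂ) (J →₀ ℂ) (J →₀ ℂ)).toLinearMap) ∘ₗ
      (TensorProduct.map R LinearMap.id) =
    ((TensorProduct.assoc ℂ (J →₀ ℂ) (J →₀ ℂ) (J →₀ ℂ)).symm.toLinearMap ∘ₗ
        TensorProduct.map LinearMap.id R ∘ₗ
        (TensorProduct.assoc ℂ (J →₀ ℂ) (J →₀ ℂ) (J →₀ ℂ)).toLinearMap) ∘ₗ
      (TensorProduct.map R LinearMap.id) ∘ₗ
      ((TensorProduct.assoc ℂ (J →₀ ℂ) (J →₀ ℂ) (J →₀ ℂ)).symm.toLinearMap ∘ₗ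
        TensorProduct.map LinearMap.id R ∘ₗ
        (TensorProduct.assoc ℂ (J →₀ ℂ) (J →₀ ℂ) (J →₀ ℂ)).toLinearMap) := by
  have hinv : ∀ α β : Γ, ε β α = (ε α β)⁻¹ := fun α β =>
    eq_inv_of_mul_eq_one_left (hε1 β α)
  have hRgt' : ∀ a b : J, b < a →
      R (Finsupp.single a (1 : ℂ) ⊗ₜ[ℂ] Finsupp.single b (1 : ℂ)) =
        (ε (p b) (p a))⁻¹ • (Finsupp.single b (1 : ℂ) ⊗ₜ[ℂ] Finsupp.single a (1 : ℂ)) := by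
    intro a b h
    rw [hRgt a b h, hinv]
  have hD0 : ∀ x : J, π (p x) = 0 →
      R (Finsupp.single x (1 : ℂ) ⊗ₜ[ℂ] Finsupp.single x (1 : ℂ)) =
        q • (Finsupp.single x (1 : ℂ) ⊗ₜ[ℂ] Finsupp.single x (1 : ℂ)) := by
    intro x h
    rw [hRdiag x, h]
    norm_num
  have hD1 : ∀ x : J, π (p x) = 1 →
      R (Finsupp.single x (1 : ℂ) ⊗ₜ[ℂ] Finsupp.single x (1 : ℂ)) =
        (-q⁻¹) • (Finsupp.single x (1 : ℂ) ⊗ₜ[ℂ] Finsupp.single x (1 : ℂ)) := by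
    intro x h
    rw [hRdiag x, h]
    norm_num
  apply Module.Basis.ext ((Finsupp.basisSingleOne.tensorProduct Finsupp.basisSingleOne).tensorProduct
    (Finsupp.basisSingleOne : Module.Basis J ℂ (J →₀ ℂ)))
  rintro ⟨⟨a, b⟩, c⟩
  simp only [Module.Basis.tensorProduct_apply, Finsupp.coe_basisSingleOne]
  rcases lt_trichotomy a b with hab | rfl | hba
  · rcases lt_trichotomy b c with hbc | rfl | hcb
    · have hac := hab.trans hbc
      simp only [LinearMap.comp_apply, LinearEquiv.coe_coe, TensorProduct.map_tmul,
      LinearMap.id_coe, id_eq, TensorProduct.assoc_tmul, TensorProduct.assoc_symm_tmul,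
      map_add, map_smul, tmul_add, tmul_smul, add_tmul, ← smul_tmul', smul_smul,
          hRlt a b hab, hRgt' b a hab, hRlt b c hbc, hRgt' c b hbc, hRlt a c hac, hRgt' c a hac]
      all_goals match_scalars
      all_goals field_simp [hq, hε0 (p a) (p b), hε0 (p b) (p c), hε0 (p a) (p c)]
      all_goals try ring
      all_goals try (left; first | trivial | ring)
    · -- a < b = c
      rcases hπ01 (p b) with hpi | hpi
      · simp only [LinearMap.comp_apply, LinearEquiv.coe_coe, TensorProduct.map_tmul,
      LinearMap.id_coe, id_eq, TensorProduct.assoc_tmul, TensorProduct.assoc_symm_tmul,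
      map_add, map_smul, tmul_add, tmul_smul, add_tmul, ← smul_tmul', smul_smul,
            hRlt a b hab, hRgt' b a hab, hD0 b hpi]
        all_goals match_scalars
        all_goals field_simp [hq, hε0 (p a) (p b)]
        all_goals try ring
        all_goals try (left; first | trivial | ring)
      · simp only [LinearMap.comp_apply, LinearEquiv.coe_coe, TensorProduct.map_tmul,
      LinearMap.id_coe, id_eq, TensorProduct.assoc_tmul, TensorProduct.assoc_symm_tmul,
      map_add, map_smul, tmul_add, tmul_smul, add_tmul, ← smul_tmul', smul_smul,
            hRlt a b hab, hRgt' b a hab, hD1 b hpi]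
        all_goals match_scalars
        all_goals field_simp [hq, hε0 (p a) (p b)]
        all_goals try ring
        all_goals try (left; first | trivial | ring)
    · rcases lt_trichotomy a c with hac | rfl | hca
      · -- a < c < b
        simp only [LinearMap.comp_apply, LinearEquiv.coe_coe, TensorProduct.map_tmul,
      LinearMap.id_coe, id_eq, TensorProduct.assoc_tmul, TensorProduct.assoc_symm_tmul,
      map_add, map_smul, tmul_add, tmul_smul, add_tmul, ← smul_tmul', smul_smul,
            hRlt a b hab, hRgt' b a hab, hRlt c b hcb, hRgt' b c hcb, hRlt a c hac, hRgt' c a hac]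
        all_goals match_scalars
        all_goals field_simp [hq, hε0 (p a) (p b), hε0 (p c) (p b), hε0 (p a) (p c)]
        all_goals try ring
        all_goals try (left; first | trivial | ring)
      · -- a = c < b (triple a b a)
        rcases hπ01 (p a) with hpi | hpi
        · simp only [LinearMap.comp_apply, LinearEquiv.coe_coe, TensorProduct.map_tmul,
      LinearMap.id_coe, id_eq, TensorProduct.assoc_tmul, TensorProduct.assoc_symm_tmul,
      map_add, map_smul, tmul_add, tmul_smul, add_tmul, ← smul_tmul', smul_smul,
              hRlt a b hab, hRgt' b a hab, hD0 a hpi]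
          all_goals match_scalars
          all_goals field_simp [hq, hε0 (p a) (p b)]
          all_goals try ring
          all_goals (left; first | trivial | ring)
        · simp only [LinearMap.comp_apply, LinearEquiv.coe_coe, TensorProduct.map_tmul,
      LinearMap.id_coe, id_eq, TensorProduct.assoc_tmul, TensorProduct.assoc_symm_tmul,
      map_add, map_smul, tmul_add, tmul_smul, add_tmul, ← smul_tmul', smul_smul,
              hRlt a b hab, hRgt' b a hab, hD1 a hpi]
          all_goals match_scalars
          all_goals field_simp [hq, hε0 (p a) (p b)]
          all_goals try ring
          all_goals (left; first | trivial | ring)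
      · -- c < a < b
        simp only [LinearMap.comp_apply, LinearEquiv.coe_coe, TensorProduct.map_tmul,
      LinearMap.id_coe, id_eq, TensorProduct.assoc_tmul, TensorProduct.assoc_symm_tmul,
      map_add, map_smul, tmul_add, tmul_smul, add_tmul, ← smul_tmul', smul_smul,
            hRlt a b hab, hRgt' b a hab, hRlt c b hcb, hRgt' b c hcb, hRlt c a hca, hRgt' a c hca]
        all_goals match_scalars
        all_goals field_simp [hq, hε0 (p a) (p b), hε0 (p c) (p b), hε0 (p c) (p a)]
        all_goals try ring
        all_goals try (left; first | trivial | ring)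
  · -- a = b
    rcases lt_trichotomy a c with hac | rfl | hca
    · -- a = b < c
      rcases hπ01 (p a) with hpi | hpi
      · simp only [LinearMap.comp_apply, LinearEquiv.coe_coe, TensorProduct.map_tmul,
      LinearMap.id_coe, id_eq, TensorProduct.assoc_tmul, TensorProduct.assoc_symm_tmul,
      map_add, map_smul, tmul_add, tmul_smul, add_tmul, ← smul_tmul', smul_smul,
            hRlt a c hac, hRgt' c a hac, hD0 a hpi]
        all_goals match_scalars
        all_goals field_simp [hq, hε0 (p a) (p c)]
        all_goals try ring
        all_goals try (left; first | trivial | ring)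
      · simp only [LinearMap.comp_apply, LinearEquiv.coe_coe, TensorProduct.map_tmul,
      LinearMap.id_coe, id_eq, TensorProduct.assoc_tmul, TensorProduct.assoc_symm_tmul,
      map_add, map_smul, tmul_add, tmul_smul, add_tmul, ← smul_tmul', smul_smul,
            hRlt a c hac, hRgt' c a hac, hD1 a hpi]
        all_goals match_scalars
        all_goals field_simp [hq, hε0 (p a) (p c)]
        all_goals try ring
        all_goals try (left; first | trivial | ring)
    · -- a = b = c
      rcases hπ01 (p a) with hpi | hpi
      · simp only [LinearMap.comp_apply, LinearEquiv.coe_coe, TensorProduct.map_tmul,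
      LinearMap.id_coe, id_eq, TensorProduct.assoc_tmul, TensorProduct.assoc_symm_tmul,
      map_add, map_smul, tmul_add, tmul_smul, add_tmul, ← smul_tmul', smul_smul,
            hD0 a hpi]
        all_goals match_scalars
        all_goals field_simp [hq]
        all_goals try ring
        all_goals try (left; first | trivial | ring)
      · simp only [LinearMap.comp_apply, LinearEquiv.coe_coe, TensorProduct.map_tmul,
      LinearMap.id_coe, id_eq, TensorProduct.assoc_tmul, TensorProduct.assoc_symm_tmul,
      map_add, map_smul, tmul_add, tmul_smul, add_tmul, ← smul_tmul', smul_smul,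
            hD1 a hpi]
        all_goals match_scalars
        all_goals field_simp [hq]
        all_goals try ring
        all_goals try (left; first | trivial | ring)
    · -- c < a = b
      rcases hπ01 (p a) with hpi | hpi
      · simp only [LinearMap.comp_apply, LinearEquiv.coe_coe, TensorProduct.map_tmul,
      LinearMap.id_coe, id_eq, TensorProduct.assoc_tmul, TensorProduct.assoc_symm_tmul,
      map_add, map_smul, tmul_add, tmul_smul, add_tmul, ← smul_tmul', smul_smul,
            hRlt c a hca, hRgt' a c hca, hD0 a hpi]
        all_goals match_scalars
        all_goals field_simp [hq, hε0 (p c) (p a)]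
        all_goals try ring
        all_goals try (left; first | trivial | ring)
      · simp only [LinearMap.comp_apply, LinearEquiv.coe_coe, TensorProduct.map_tmul,
      LinearMap.id_coe, id_eq, TensorProduct.assoc_tmul, TensorProduct.assoc_symm_tmul,
      map_add, map_smul, tmul_add, tmul_smul, add_tmul, ← smul_tmul', smul_smul,
            hRlt c a hca, hRgt' a c hca, hD1 a hpi]
        all_goals match_scalars
        all_goals field_simp [hq, hε0 (p c) (p a)]
        all_goals try ring
        all_goals try (left; first | trivial | ring)
  · -- b < a
    rcases lt_trichotomy b c with hbc | rfl | hcb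
    · rcases lt_trichotomy a c with hac | rfl | hca
      · -- b < a < c
        simp only [LinearMap.comp_apply, LinearEquiv.coe_coe, TensorProduct.map_tmul,
      LinearMap.id_coe, id_eq, TensorProduct.assoc_tmul, TensorProduct.assoc_symm_tmul,
      map_add, map_smul, tmul_add, tmul_smul, add_tmul, ← smul_tmul', smul_smul,
            hRlt b a hba, hRgt' a b hba, hRlt b c hbc, hRgt' c b hbc, hRlt a c hac, hRgt' c a hac]
        all_goals match_scalars
        all_goals field_simp [hq, hε0 (p b) (p a), hε0 (p b) (p c), hε0 (p a) (p c)]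
        all_goals try ring
        all_goals try (left; first | trivial | ring)
      · -- b < a = c (triple a b a)
        rcases hπ01 (p a) with hpi | hpi
        · simp only [LinearMap.comp_apply, LinearEquiv.coe_coe, TensorProduct.map_tmul,
      LinearMap.id_coe, id_eq, TensorProduct.assoc_tmul, TensorProduct.assoc_symm_tmul,
      map_add, map_smul, tmul_add, tmul_smul, add_tmul, ← smul_tmul', smul_smul,
              hRlt b a hba, hRgt' a b hba, hD0 a hpi]
          all_goals match_scalars
          all_goals field_simp [hq, hε0 (p b) (p a)]
          all_goals try ring
          all_goals (left; first | trivial | ring)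
        · simp only [LinearMap.comp_apply, LinearEquiv.coe_coe, TensorProduct.map_tmul,
      LinearMap.id_coe, id_eq, TensorProduct.assoc_tmul, TensorProduct.assoc_symm_tmul,
      map_add, map_smul, tmul_add, tmul_smul, add_tmul, ← smul_tmul', smul_smul,
              hRlt b a hba, hRgt' a b hba, hD1 a hpi]
          all_goals match_scalars
          all_goals field_simp [hq, hε0 (p b) (p a)]
          all_goals try ring
          all_goals (left; first | trivial | ring)
      · -- b < c < a
        simp only [LinearMap.comp_apply, LinearEquiv.coe_coe, TensorProduct.map_tmul,
      LinearMap.id_coe, id_eq, TensorProduct.assoc_tmul, TensorProduct.assoc_symm_tmul,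
      map_add, map_smul, tmul_add, tmul_smul, add_tmul, ← smul_tmul', smul_smul,
            hRlt b a hba, hRgt' a b hba, hRlt b c hbc, hRgt' c b hbc, hRlt c a hca, hRgt' a c hca]
        all_goals match_scalars
        all_goals field_simp [hq, hε0 (p b) (p a), hε0 (p b) (p c), hε0 (p c) (p a)]
        all_goals try ring
        all_goals try (left; first | trivial | ring)
    · -- b = c < a
      rcases hπ01 (p b) with hpi | hpi
      · simp only [LinearMap.comp_apply, LinearEquiv.coe_coe, TensorProduct.map_tmul,
      LinearMap.id_coe, id_eq, TensorProduct.assoc_tmul, TensorProduct.assoc_symm_tmul,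
      map_add, map_smul, tmul_add, tmul_smul, add_tmul, ← smul_tmul', smul_smul,
            hRlt b a hba, hRgt' a b hba, hD0 b hpi]
        all_goals match_scalars
        all_goals field_simp [hq, hε0 (p b) (p a)]
        all_goals try ring
        all_goals try (left; first | trivial | ring)
      · simp only [LinearMap.comp_apply, LinearEquiv.coe_coe, TensorProduct.map_tmul,
      LinearMap.id_coe, id_eq, TensorProduct.assoc_tmul, TensorProduct.assoc_symm_tmul,
      map_add, map_smul, tmul_add, tmul_smul, add_tmul, ← smul_tmul', smul_smul,
            hRlt b a hba, hRgt' a b hba, hD1 b hpi]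
        all_goals match_scalars
        all_goals field_simp [hq, hε0 (p b) (p a)]
        all_goals try ring
        all_goals try (left; first | trivial | ring)
    · -- c < b < a
      have hca := hcb.trans hba
      simp only [LinearMap.comp_apply, LinearEquiv.coe_coe, TensorProduct.map_tmul,
      LinearMap.id_coe, id_eq, TensorProduct.assoc_tmul, TensorProduct.assoc_symm_tmul,
      map_add, map_smul, tmul_add, tmul_smul, add_tmul, ← smul_tmul', smul_smul,
          hRlt b a hba, hRgt' a b hba, hRlt c b hcb, hRgt' b c hcb, hRlt c a hca, hRgt' a c hca]
      all_goals match_scalars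
      all_goals field_simp [hq, hε0 (p b) (p a), hε0 (p c) (p b), hε0 (p c) (p a)]
      all_goals try ring
      all_goals try (left; first | trivial | ring)
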